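/- arXiv:1507.00798 — 3 statements merged into one kernel-verified Lean document; each statement's English description precedes it below -/
import Mathlib

section
/- Let μ be a measure on a space X and let u, v : X → ℝ be square-integrable functions. Then √(∫ (1-u)² dμ) + √(∫ (1-v)²·u² dμ) ≥ √(∫ (1 - u·v)² dμ). -/
open MeasureTheory

/-- Measure-theoretic triangle inequality for the elastic energy:
`√(∫ (1-u)²) + √(∫ (1-v)²u²) ≥ √(∫ (1-uv)²)` for square-integrable `u, v`. -/
theorem elastic_energy_triangle
    {X : Type*} [MeasurableSpace X] (μ : Measure X) (u v : X → ℝ)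
    (hu : MemLp u 2 μ) (hv : MemLp v 2 μ)
    (huv : MemLp (fun x => u x * v x) 2 μ) :
    Real.sqrt (∫ x, (1 - u x) ^ 2 ∂μ) + Real.sqrt (∫ x, (1 - v x) ^ 2 * (u x) ^ 2 ∂μ)
      ≥ Real.sqrt (∫ x, (1 - u x * v x) ^ 2 ∂μ) := by
  set f : X → ℝ := fun x => 1 - u x with hf_def
  set g : X → ℝ := fun x => u x - u x * v x with hg_def
  have hg : MemLp g 2 μ := hu.sub huv
  by_cases hf : MemLp f 2 μ
  · -- main case: f ∈ L²
    have hfg : MemLp (fun x => f x + g x) 2 μ := hf.add hg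
    have hf2 : Integrable (fun x => f x ^ 2) μ := hf.integrable_sq
    have hg2 : Integrable (fun x => g x ^ 2) μ := hg.integrable_sq
    have hfg2 : Integrable (fun x => (f x + g x) ^ 2) μ := hfg.integrable_sq
    have hcross : Integrable (fun x => f x * g x) μ := by
      have : (fun x => f x * g x) =
          fun x => ((f x + g x) ^ 2 - f x ^ 2 - g x ^ 2) / 2 := by
        funext x; ring
      rw [this]
      exact (((hfg2.sub hf2).sub hg2).div_const 2)
    set A := ∫ x, f x ^ 2 ∂μ with hA
    set B := ∫ x, g x ^ 2 ∂μ with hB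
    have hA0 : 0 ≤ A := integral_nonneg fun x => sq_nonneg _
    have hB0 : 0 ≤ B := integral_nonneg fun x => sq_nonneg _
    -- Cauchy–Schwarz on |f|, |g|
    have hCS : ∫ x, f x * g x ∂μ ≤ Real.sqrt A * Real.sqrt B := by
      have habs : ∫ x, f x * g x ∂μ ≤ ∫ x, |f x| * |g x| ∂μ := by
        refine integral_mono hcross (by simpa [abs_mul] using hcross.abs) fun x => ?_
        rw [← abs_mul]; exact le_abs_self _
      have h2 : (2 : ℝ).HolderConjugate 2 := by
        constructor <;> norm_num
      have hCS' := integral_mul_le_Lp_mul_Lq_of_nonneg h2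
        (Filter.Eventually.of_forall fun x => abs_nonneg (f x))
        (Filter.Eventually.of_forall fun x => abs_nonneg (g x))
        (by rw [ENNReal.ofReal_ofNat]; exact hf.abs) (by rw [ENNReal.ofReal_ofNat]; exact hg.abs)
      have hcast : ((2:ℝ)) = ((2:ℕ):ℝ) := by norm_num
      have hfsq : ∫ x, |f x| ^ (2:ℝ) ∂μ = A := by
        rw [hA]; congr 1; funext x
        rw [hcast, Real.rpow_natCast, sq_abs]
      have hgsq : ∫ x, |g x| ^ (2:ℝ) ∂μ = B := by
        rw [hB]; congr 1; funext x
        rw [hcast, Real.rpow_natCast, sq_abs]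
      calc ∫ x, f x * g x ∂μ ≤ ∫ x, |f x| * |g x| ∂μ := habs
        _ ≤ (∫ x, |f x| ^ (2:ℝ) ∂μ) ^ ((1:ℝ)/2) * (∫ x, |g x| ^ (2:ℝ) ∂μ) ^ ((1:ℝ)/2) := hCS'
        _ = Real.sqrt A * Real.sqrt B := by
            rw [hfsq, hgsq, Real.sqrt_eq_rpow, Real.sqrt_eq_rpow]
    -- expand the square
    have h12 : Integrable (fun x => f x ^ 2 + 2 * (f x * g x)) μ :=
      hf2.add (hcross.const_mul 2)
    have h2' : Integrable (fun x => 2 * (f x * g x)) μ := hcross.const_mul 2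
    have hexp : ∫ x, (f x + g x) ^ 2 ∂μ = A + 2 * ∫ x, f x * g x ∂μ + B := by
      have he : (fun x => (f x + g x) ^ 2) =
          fun x => f x ^ 2 + 2 * (f x * g x) + g x ^ 2 := by funext x; ring
      rw [he, integral_add h12 hg2, integral_add hf2 h2', integral_const_mul]
    have key : ∫ x, (f x + g x) ^ 2 ∂μ ≤ (Real.sqrt A + Real.sqrt B) ^ 2 := by
      have hsq : (Real.sqrt A + Real.sqrt B) ^ 2
          = A + 2 * (Real.sqrt A * Real.sqrt B) + B := by
        rw [add_sq, Real.sq_sqrt hA0, Real.sq_sqrt hB0]; ring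
      rw [hexp, hsq]
      linarith [hCS]
    have hfin : Real.sqrt (∫ x, (f x + g x) ^ 2 ∂μ) ≤ Real.sqrt A + Real.sqrt B := by
      have h := Real.sqrt_le_sqrt key
      rwa [Real.sqrt_sq (by positivity)] at h
    have e1 : (∫ x, (1 - u x * v x) ^ 2 ∂μ) = ∫ x, (f x + g x) ^ 2 ∂μ := by
      congr 1; funext x; simp only [hf_def, hg_def]; ring
    have e2 : (∫ x, (1 - v x) ^ 2 * (u x) ^ 2 ∂μ) = B := by
      rw [hB]; congr 1; funext x; simp only [hg_def]; ring
    rw [ge_iff_le, e1, e2]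
    exact hfin
  · -- degenerate case: (1-u)² not integrable, so (1-uv)² isn't either
    have hnint : ¬ Integrable (fun x => (1 - u x * v x) ^ 2) μ := by
      intro hint
      have hmeas : AEStronglyMeasurable (fun x => 1 - u x * v x) μ :=
        aestronglyMeasurable_const.sub huv.aestronglyMeasurable
      have hmem : MemLp (fun x => 1 - u x * v x) 2 μ :=
        (memLp_two_iff_integrable_sq hmeas).mpr hint
      have heq : f = (fun x => 1 - u x * v x) - g := by
        funext x; simp only [hf_def, hg_def, Pi.sub_apply]; ring
      exact hf (heq ▸ hmem.sub hg)
    rw [integral_undef hnint, Real.sqrt_zero]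
    positivity
end

section
/- For the Möbius transformation m(z) = Az with |A| > 1, the average stretching satisfies E_1(m) = ∫_ℂ λ_m dA₁ = 8π|A|log|A|/(|A|² − 1), where dA₁ = 4/(1+|z|²)² dA is the spherical area element. In particular, E_1(m) → 0 as |A| → ∞. -/
open Filter

open MeasureTheory Set Real in
theorem aux_radial_integral (a : ℝ) (ha : 1 < a) :
    ∫ r in Ioi (0:ℝ),
      r * (a * (1 + r ^ 2) / (1 + a ^ 2 * r ^ 2) * (4 / (1 + r ^ 2) ^ 2))
      = 4 * a * Real.log a / (a ^ 2 - 1) := by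
  have ha0 : 0 < a := lt_trans one_pos ha
  have ha2 : (0:ℝ) < a ^ 2 - 1 := by nlinarith
  set H : ℝ → ℝ := fun r => 2 * a / (a ^ 2 - 1) *
    (Real.log (1 + a ^ 2 * r ^ 2) - Real.log (1 + r ^ 2)) with hH
  have hpos1 : ∀ r : ℝ, (0:ℝ) < 1 + a ^ 2 * r ^ 2 := fun r => by positivity
  have hpos2 : ∀ r : ℝ, (0:ℝ) < 1 + r ^ 2 := fun r => by positivity
  have hderiv : ∀ r : ℝ, HasDerivAt H
      (r * (a * (1 + r ^ 2) / (1 + a ^ 2 * r ^ 2) * (4 / (1 + r ^ 2) ^ 2))) r := by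
    intro r
    have h1 : HasDerivAt (fun r : ℝ => 1 + a ^ 2 * r ^ 2) (a ^ 2 * (2 * r)) r := by
      simpa using ((hasDerivAt_pow 2 r).const_mul (a ^ 2)).const_add 1
    have h2 : HasDerivAt (fun r : ℝ => 1 + r ^ 2) (2 * r) r := by
      simpa using (hasDerivAt_pow 2 r).const_add 1
    have hl1 := h1.log (hpos1 r).ne'
    have hl2 := h2.log (hpos2 r).ne'
    have hthis := ((hl1.sub hl2).const_mul (2 * a / (a ^ 2 - 1)))
    have := (hpos1 r).ne'
    have := (hpos2 r).ne'
    refine hthis.congr_deriv ?_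
    field_simp
    ring
  have hlim : Tendsto H atTop (nhds (4 * a * Real.log a / (a ^ 2 - 1))) := by
    have hratio : Tendsto (fun r : ℝ => (1 + a ^ 2 * r ^ 2) / (1 + r ^ 2)) atTop
        (nhds (a ^ 2)) := by
      have h1 : Tendsto (fun r : ℝ => r⁻¹ ^ 2) atTop (nhds 0) := by
        have := tendsto_inv_atTop_zero (𝕜 := ℝ)
        simpa using (this.pow 2)
      have h2 : Tendsto (fun r : ℝ => (r⁻¹ ^ 2 + a ^ 2) / (r⁻¹ ^ 2 + 1)) atTop
          (nhds ((0 + a ^ 2) / (0 + 1))) := by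
        exact ((h1.add tendsto_const_nhds).div (h1.add tendsto_const_nhds) (by norm_num))
      rw [show (0 + a ^ 2) / (0 + 1) = a ^ 2 by ring] at h2
      refine h2.congr' ?_
      filter_upwards [eventually_gt_atTop (0:ℝ)] with r hr
      have hr0 : r ≠ 0 := hr.ne'
      field_simp
    have hlog : Tendsto (fun r : ℝ => Real.log ((1 + a ^ 2 * r ^ 2) / (1 + r ^ 2))) atTop
        (nhds (Real.log (a ^ 2))) :=
      (Real.continuousAt_log (by positivity)).tendsto.comp hratio
    have heq : ∀ r : ℝ, Real.log ((1 + a ^ 2 * r ^ 2) / (1 + r ^ 2))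
        = Real.log (1 + a ^ 2 * r ^ 2) - Real.log (1 + r ^ 2) := fun r =>
      Real.log_div (hpos1 r).ne' (hpos2 r).ne'
    simp only [heq] at hlog
    have := hlog.const_mul (2 * a / (a ^ 2 - 1))
    convert this using 2
    rw [Real.log_pow]
    push_cast
    field_simp
    ring
  have h0 : H 0 = 0 := by simp [hH]
  have key := MeasureTheory.integral_Ioi_of_hasDerivAt_of_nonneg
    (g := H)
    (hderiv 0).continuousAt.continuousWithinAt
    (fun x _ => hderiv x)
    (fun x hx => by
      have hx0 : (0:ℝ) < x := hx
      have := ha0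
      positivity)
    hlim
  rw [key, h0, sub_zero]

open MeasureTheory Set Real in
theorem aux_full_integral (a : ℝ) (ha : 1 < a) :
    (∫ z : ℂ,
        (a * (1 + ‖z‖ ^ 2) / (1 + a ^ 2 * ‖z‖ ^ 2))
          * (4 / (1 + ‖z‖ ^ 2) ^ 2))
      = 8 * Real.pi * a * Real.log a / (a ^ 2 - 1) := by
  rw [← Complex.integral_comp_polarCoord_symm
    (fun z => (a * (1 + ‖z‖ ^ 2) / (1 + a ^ 2 * ‖z‖ ^ 2))
          * (4 / (1 + ‖z‖ ^ 2) ^ 2))]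
  rw [show polarCoord.target = Ioi (0:ℝ) ×ˢ Ioo (-π) π from rfl]
  have hcongr : ∫ p in Ioi (0:ℝ) ×ˢ Ioo (-π) π,
      p.1 • ((a * (1 + ‖Complex.polarCoord.symm p‖ ^ 2) /
          (1 + a ^ 2 * ‖Complex.polarCoord.symm p‖ ^ 2))
        * (4 / (1 + ‖Complex.polarCoord.symm p‖ ^ 2) ^ 2))
      = ∫ p in Ioi (0:ℝ) ×ˢ Ioo (-π) π,
        (p.1 * (a * (1 + p.1 ^ 2) / (1 + a ^ 2 * p.1 ^ 2) * (4 / (1 + p.1 ^ 2) ^ 2)))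
          * (1 : ℝ) := by
    apply setIntegral_congr_fun (by measurability)
    intro p hp
    have hp1 : 0 < p.1 := hp.1
    simp only [smul_eq_mul]
    rw [Complex.norm_polarCoord_symm, abs_of_pos hp1]
    ring
  have hprod : (∫ p in Ioi (0:ℝ) ×ˢ Ioo (-π) π,
        p.1 * (a * (1 + p.1 ^ 2) / (1 + a ^ 2 * p.1 ^ 2) * (4 / (1 + p.1 ^ 2) ^ 2)) * 1
        ∂((volume : Measure ℝ).prod volume))
      = (∫ r in Ioi (0:ℝ),
          r * (a * (1 + r ^ 2) / (1 + a ^ 2 * r ^ 2) * (4 / (1 + r ^ 2) ^ 2)))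
        * ∫ _ in Ioo (-π) π, (1:ℝ) :=
    setIntegral_prod_mul
      (fun r : ℝ => r * (a * (1 + r ^ 2) / (1 + a ^ 2 * r ^ 2) * (4 / (1 + r ^ 2) ^ 2)))
      (fun _ : ℝ => (1:ℝ)) _ _
  rw [hcongr, MeasureTheory.Measure.volume_eq_prod, hprod]
  rw [aux_radial_integral a ha]
  rw [integral_const, measureReal_restrict_apply_univ, measureReal_def, Real.volume_Ioo]
  have h2pi : π - (-π) = 2 * π := by ring
  rw [h2pi, ENNReal.toReal_ofReal (by positivity)]
  have hpi : (0:ℝ) < π := Real.pi_pos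
  have ha2 : (0:ℝ) < a ^ 2 - 1 := by nlinarith
  field_simp
  ring

theorem aux_tendsto :
    Tendsto (fun t : ℝ => 8 * Real.pi * t * Real.log t / (t ^ 2 - 1))
      atTop (nhds 0) := by
  have h1 : Tendsto (fun t : ℝ => Real.log t / t) atTop (nhds 0) :=
    Real.isLittleO_log_id_atTop.tendsto_div_nhds_zero
  have h2 : Tendsto (fun t : ℝ => 8 * Real.pi * t ^ 2 / (t ^ 2 - 1)) atTop
      (nhds (8 * Real.pi)) := by
    have hinv : Tendsto (fun t : ℝ => (t ^ 2)⁻¹) atTop (nhds 0) := by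
      have : Tendsto (fun t : ℝ => t ^ 2) atTop atTop := tendsto_pow_atTop (by norm_num)
      exact tendsto_inv_atTop_zero.comp this
    have h3 : Tendsto (fun t : ℝ => 8 * Real.pi / (1 - (t ^ 2)⁻¹)) atTop
        (nhds (8 * Real.pi / (1 - 0))) :=
      Filter.Tendsto.div tendsto_const_nhds (tendsto_const_nhds.sub hinv) (by norm_num)
    rw [show (8 * Real.pi / (1 - 0)) = 8 * Real.pi by ring] at h3
    refine h3.congr' ?_
    filter_upwards [eventually_gt_atTop (1:ℝ)] with t ht
    have ht0 : (0:ℝ) < t := lt_trans one_pos ht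
    have ht2 : (0:ℝ) < t ^ 2 - 1 := by nlinarith
    field_simp
  have := h1.mul h2
  rw [zero_mul] at this
  refine this.congr' ?_
  filter_upwards [eventually_gt_atTop (1:ℝ)] with t ht
  have ht0 : (0:ℝ) < t := lt_trans one_pos ht
  have ht2 : (0:ℝ) < t ^ 2 - 1 := by nlinarith
  field_simp

/-- For `m(z) = Az` with `|A| > 1`, the average stretching
`E_1(m) = ∫_ℂ λ_m · 4/(1+|z|²)² dA` equals `8π|A|log|A|/(|A|²-1)`, and this
quantity tends to `0` as `|A| → ∞`. -/
theorem average_stretching_of_hyperbolic (A : ℂ) (hA : 1 < ‖A‖) :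
    (∫ z : ℂ,
        (‖A‖ * (1 + ‖z‖ ^ 2)
            / (1 + ‖A‖ ^ 2 * ‖z‖ ^ 2))
          * (4 / (1 + ‖z‖ ^ 2) ^ 2)
      = 8 * Real.pi * ‖A‖ * Real.log (‖A‖)
          / (‖A‖ ^ 2 - 1)) ∧
    Tendsto (fun t : ℝ => 8 * Real.pi * t * Real.log t / (t ^ 2 - 1))
      atTop (nhds 0) := by
  exact ⟨aux_full_integral (‖A‖) hA, aux_tendsto⟩
end

section
/- Let A, B ∈ ℂ with |A| ≥ 1, B real and positive. Let D₁ = D(−B/A, B/(2|A|)) and D₂ = D(0, B/(2|A|)). Then every z ∈ ℂ \ (D₁ ∪ D₂) satisfies both |Az + B| ≥ B/2 and |Az + B| ≥ |z|/3. -/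
/-- Case (3) claim: with `|A| ≥ 1`, `B > 0`, `D₁ = D(-B/A, B/(2|A|))`,
`D₂ = D(0, B/(2|A|))`, every `z ∈ ℂ \ (D₁ ∪ D₂)` satisfies both
`|Az + B| ≥ B/2` and `|Az + B| ≥ |z|/3`. -/
theorem outside_disks_bound_case3 (A : ℂ) (B : ℝ)
    (hA : 1 ≤ ‖A‖) (hB : 0 < B) (z : ℂ)
    (hz : z ∉ Metric.ball (-(B : ℂ) / A) (B / (2 * ‖A‖))
            ∪ Metric.ball (0 : ℂ) (B / (2 * ‖A‖))) :
    ‖A * z + (B : ℂ)‖ ≥ B / 2 ∧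
    ‖A * z + (B : ℂ)‖ ≥ ‖z‖ / 3 := by
  have hA0 : A ≠ 0 := by
    intro h; simp [h] at hA; linarith
  have hAabs : (0:ℝ) < ‖A‖ := norm_pos_iff.mpr hA0
  rw [Set.mem_union, not_or] at hz
  obtain ⟨h1, h2⟩ := hz
  rw [Metric.mem_ball, not_lt, Complex.dist_eq] at h1 h2
  simp only [sub_zero] at h2
  -- first bound
  have key : ‖A * z + B‖ = ‖A‖ * ‖z - -(B:ℂ)/A‖ := by
    rw [← norm_mul]
    congr 1
    field_simp
    ring
  have hb1 : ‖A * z + B‖ ≥ B / 2 := by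
    rw [key]
    have := mul_le_mul_of_nonneg_left h1 (le_of_lt hAabs)
    calc B / 2 = ‖A‖ * (B / (2 * ‖A‖)) := by field_simp
      _ ≤ _ := this
  refine ⟨hb1, ?_⟩
  rcases le_or_gt (3 * B / 2) (‖z‖) with h | h
  · have : ‖A * z + B‖ ≥ ‖A‖ * ‖z‖ - B := by
      calc ‖A * z + B‖ ≥ ‖A * z‖ - ‖(B:ℂ)‖ := by
            have h4 := norm_add_le (A * z + B) (-(B:ℂ))
            simp only [add_neg_cancel_right, norm_neg] at h4
            linarith
        _ = ‖A‖ * ‖z‖ - B := by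
            rw [norm_mul, Complex.norm_real, Real.norm_eq_abs, abs_of_pos hB]
    have h3 : ‖A‖ * ‖z‖ ≥ ‖z‖ := by
      nlinarith [norm_nonneg z]
    linarith
  · have : ‖z‖ / 3 < B / 2 := by linarith
    linarith
end
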